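/- Let r be a real number and let v : ℕ → ℝ have non-increasing differences. Then the function v' : ℕ → ℝ defined by v'(i) = max{v(i), r + v(i+1)} also has non-increasing differences. -/
import Mathlib

/-- If `v : ℕ → ℝ` has non-increasing differences, then
`v' i = max (v i) (r + v (i+1))` also has non-increasing differences. -/
theorem max_preserves_nonincreasing_differences (r : ℝ) (v : ℕ → ℝ)
    (hv : ∀ i : ℕ, v (i + 2) - v (i + 1) ≤ v (i + 1) - v i) :
    ∀ i : ℕ,
      (fun i => max (v i) (r + v (i + 1))) (i + 2) - (fun i => max (v i) (r + v (i + 1))) (i + 1) ≤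
      (fun i => max (v i) (r + v (i + 1))) (i + 1) - (fun i => max (v i) (r + v (i + 1))) i := by
  intro i
  simp only
  have h1 := hv i
  have h2 := hv (i + 1)
  have a1 := le_max_left (v (i + 1)) (r + v (i + 1 + 1))
  have a2 := le_max_right (v (i + 1)) (r + v (i + 1 + 1))
  rcases max_cases (v i) (r + v (i + 1)) with ⟨e0, _⟩ | ⟨e0, _⟩ <;>
    rcases max_cases (v (i + 2)) (r + v (i + 2 + 1)) with ⟨e2, _⟩ | ⟨e2, _⟩ <;>
    rw [e0, e2] <;>
    simp only [show i + 1 + 1 = i + 2 from rfl, show i + 2 + 1 = i + 1 + 2 from rfl] at * <;>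
    linarith
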